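/- Let p > 1. If all 2L points r₁,...,r_L, b₁,...,b_L together with their antipodes (the points x + 1/2 taken modulo 1) are pairwise distinct (4L distinct points of [0,1) in total), then every optimal matching is cyclic. -/

import Mathlib

/-- Distance on the circle of unit circumference, for points represented in `[0,1)`. -/
noncomputable def circleDist (x y : ℝ) : ℝ := min |x - y| (1 - |x - y|)

/-- The antipode of a point of `[0,1)`: the point `x + 1/2` taken modulo `1`. -/
noncomputable def antipode (x : ℝ) : ℝ := if x + 1/2 < 1 then x + 1/2 else x + 1/2 - 1

/-- An ordered triple of pairwise distinct points of `[0,1)` is cyclically oriented if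
the points appear in counter-clockwise order. -/
def CyclicallyOriented (x y z : ℝ) : Prop :=
  (x < y ∧ y < z) ∨ (y < z ∧ z < x) ∨ (z < x ∧ x < y)


lemma circleDist_nonneg' {x y : ℝ} (hx : x ∈ Set.Ico (0:ℝ) 1) (hy : y ∈ Set.Ico (0:ℝ) 1) :
    0 ≤ circleDist x y := by
  obtain ⟨hx0, hx1⟩ := hx; obtain ⟨hy0, hy1⟩ := hy
  have h : |x - y| < 1 := abs_lt.mpr ⟨by linarith, by linarith⟩
  exact le_min (abs_nonneg _) (by linarith)

lemma circleDist_le_abs_add_int {x y : ℝ} (hx : x ∈ Set.Ico (0:ℝ) 1) (hy : y ∈ Set.Ico (0:ℝ) 1)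
    (k : ℤ) : circleDist x y ≤ |x - y + k| := by
  obtain ⟨hx0, hx1⟩ := hx; obtain ⟨hy0, hy1⟩ := hy
  rcases eq_or_ne k 0 with rfl | hk
  · rw [Int.cast_zero, add_zero]
    exact min_le_left _ _
  · have h1 : (1:ℝ) ≤ |(k:ℝ)| := by exact_mod_cast Int.one_le_abs hk
    have h2 : |(k:ℝ)| ≤ |x - y + k| + |x - y| := by
      have h3 := abs_add_le (x - y + (k:ℝ)) (-(x - y))
      rw [abs_neg] at h3
      have h4 : x - y + (k:ℝ) + -(x - y) = (k:ℝ) := by ring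
      rw [h4] at h3
      exact h3
    calc circleDist x y ≤ 1 - |x - y| := min_le_right _ _
    _ ≤ |x - y + k| := by linarith

lemma circleDist_eq_abs_round {x y : ℝ} (hx : x ∈ Set.Ico (0:ℝ) 1) (hy : y ∈ Set.Ico (0:ℝ) 1) :
    circleDist x y = |y - x - round (y - x)| := by
  obtain ⟨hx0, hx1⟩ := hx; obtain ⟨hy0, hy1⟩ := hy
  unfold circleDist
  rcases lt_or_ge (y - x) (-(1/2 : ℝ)) with h | h
  · have hr : round (y - x) = -1 := by
      rw [round_eq, Int.floor_eq_iff]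
      constructor
      · push_cast; linarith
      · push_cast; linarith
    rw [hr]
    have e1 : |x - y| = x - y := abs_of_pos (by linarith)
    have e2 : |y - x - ((-1 : ℤ) : ℝ)| = y - x + 1 := by
      push_cast
      rw [abs_of_pos (by linarith)]
      ring
    rw [e1, e2, min_eq_right (by linarith)]
    ring
  · rcases lt_or_ge (y - x) (1/2 : ℝ) with h' | h'
    · have hr : round (y - x) = 0 := by
        rw [round_eq, Int.floor_eq_iff]
        constructor
        · push_cast; linarith
        · push_cast; linarith
      rw [hr]
      have e2 : |y - x - ((0 : ℤ) : ℝ)| = |x - y| := by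
        push_cast
        rw [sub_zero, abs_sub_comm]
      rw [e2]
      have hle : |x - y| ≤ 1/2 := abs_le.mpr ⟨by linarith, by linarith⟩
      exact min_eq_left (by linarith)
    · have hr : round (y - x) = 1 := by
        rw [round_eq, Int.floor_eq_iff]
        constructor
        · push_cast; linarith
        · push_cast; linarith
      rw [hr]
      have e1 : |x - y| = y - x := by
        rw [abs_sub_comm]; exact abs_of_pos (by linarith)
      have e2 : |y - x - ((1 : ℤ) : ℝ)| = 1 - (y - x) := by
        push_cast
        rw [abs_of_nonpos (by linarith)]
        ring
      rw [e1, e2, min_eq_right (by linarith)]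

lemma strictConvexOn_abs_rpow {p : ℝ} (hp : 1 < p) :
    StrictConvexOn ℝ Set.univ (fun x : ℝ => |x| ^ p) := by
  have hp0 : (0:ℝ) < p := by linarith
  refine ⟨convex_univ, ?_⟩
  intro x _ y _ hxy a b ha hb hab
  simp only [smul_eq_mul]
  by_cases habs : |x| = |y|
  · have hx0 : x = -y := by
      rcases abs_eq_abs.mp habs with h | h
      · exact absurd h hxy
      · exact h
    have hy0 : y ≠ 0 := by
      rintro rfl
      simp at hx0
      exact hxy (by rw [hx0])
    have h1 : |a * x + b * y| < |y| := by
      have e : a * x + b * y = (b - a) * y := by rw [hx0]; ring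
      rw [e, abs_mul]
      have hba : |b - a| < 1 := abs_lt.mpr ⟨by linarith, by linarith⟩
      have hyp : 0 < |y| := abs_pos.mpr hy0
      nlinarith
    calc |a * x + b * y| ^ p < |y| ^ p := Real.rpow_lt_rpow (abs_nonneg _) h1 hp0
    _ = a * |x| ^ p + b * |y| ^ p := by rw [habs, ← add_mul, hab, one_mul]
  · have key := (strictConvexOn_rpow hp).2 (Set.mem_Ici.mpr (abs_nonneg x))
      (Set.mem_Ici.mpr (abs_nonneg y)) habs ha hb hab
    simp only [smul_eq_mul] at key
    have tri : |a * x + b * y| ≤ a * |x| + b * |y| := by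
      calc |a * x + b * y| ≤ |a * x| + |b * y| := abs_add_le _ _
      _ = a * |x| + b * |y| := by rw [abs_mul, abs_mul, abs_of_pos ha, abs_of_pos hb]
    calc |a * x + b * y| ^ p ≤ (a * |x| + b * |y|) ^ p :=
          Real.rpow_le_rpow (abs_nonneg _) tri hp0.le
    _ < a * |x| ^ p + b * |y| ^ p := key

lemma exchange_strict {p : ℝ} (hp : 1 < p) {U u V : ℝ} (h1 : U < u) (h2 : u < V) :
    |u| ^ p + |U + V - u| ^ p < |U| ^ p + |V| ^ p := by
  have hUV : U < V := h1.trans h2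
  have hden : 0 < V - U := by linarith
  set a : ℝ := (V - u) / (V - U) with ha
  set b : ℝ := (u - U) / (V - U) with hb
  have ha0 : 0 < a := div_pos (by linarith) hden
  have hb0 : 0 < b := div_pos (by linarith) hden
  have hab : a + b = 1 := by rw [ha, hb]; field_simp; ring
  have hu : a * U + b * V = u := by rw [ha, hb]; field_simp; ring
  have hv : b * U + a * V = U + V - u := by rw [ha, hb]; field_simp; ring
  have sc := strictConvexOn_abs_rpow hp
  have h3 := sc.2 (Set.mem_univ U) (Set.mem_univ V) (ne_of_lt hUV) ha0 hb0 hab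
  have h4 := sc.2 (Set.mem_univ U) (Set.mem_univ V) (ne_of_lt hUV) hb0 ha0 (by linarith)
  simp only [smul_eq_mul] at h3 h4
  rw [hu] at h3
  rw [hv] at h4
  have hsum : a * |U| ^ p + b * |V| ^ p + (b * |U| ^ p + a * |V| ^ p) = |U| ^ p + |V| ^ p := by
    linear_combination (|U| ^ p + |V| ^ p) * hab
  linarith

lemma CO_rot {x y z : ℝ} (h : CyclicallyOriented x y z) : CyclicallyOriented y z x := by
  unfold CyclicallyOriented at *
  tauto

lemma CO_total {x y z : ℝ} (hxy : x ≠ y) (hyz : y ≠ z) (hxz : x ≠ z) :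
    CyclicallyOriented x y z ∨ CyclicallyOriented x z y := by
  unfold CyclicallyOriented
  rcases hxy.lt_or_gt with h1 | h1 <;> rcases hyz.lt_or_gt with h2 | h2 <;>
    rcases hxz.lt_or_gt with h3 | h3 <;> first | tauto | (exfalso; linarith)

lemma CO_asymm {x y z : ℝ} (h1 : CyclicallyOriented x y z) (h2 : CyclicallyOriented x z y) :
    False := by
  unfold CyclicallyOriented at *
  rcases h1 with ⟨a1, a2⟩ | ⟨a1, a2⟩ | ⟨a1, a2⟩ <;> rcases h2 with ⟨c1, c2⟩ | ⟨c1, c2⟩ | ⟨c1, c2⟩ <;>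
    linarith

lemma residue_orient {c₁ c₂ c₃ y₁ y₂ y₃ : ℝ} {k₁ k₂ k₃ : ℤ}
    (h12 : c₁ < c₂) (h23 : c₂ < c₃) (h31 : c₃ < c₁ + 1)
    (hy₁ : y₁ ∈ Set.Ico (0:ℝ) 1) (hy₂ : y₂ ∈ Set.Ico (0:ℝ) 1) (hy₃ : y₃ ∈ Set.Ico (0:ℝ) 1)
    (e₁ : c₁ = y₁ + k₁) (e₂ : c₂ = y₂ + k₂) (e₃ : c₃ = y₃ + k₃) :
    CyclicallyOriented y₁ y₂ y₃ := by
  obtain ⟨h10, h11⟩ := hy₁; obtain ⟨h20, h21⟩ := hy₂; obtain ⟨h30, h31'⟩ := hy₃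
  have d21 : k₂ = k₁ ∨ k₂ = k₁ + 1 := by
    have hA : ((k₂ - k₁ : ℤ) : ℝ) < 2 := by push_cast; linarith
    have hB : (-1 : ℝ) < ((k₂ - k₁ : ℤ) : ℝ) := by push_cast; linarith
    have hA' : (k₂ - k₁ : ℤ) < 2 := by exact_mod_cast hA
    have hB' : (-1 : ℤ) < (k₂ - k₁ : ℤ) := by exact_mod_cast hB
    omega
  have d32 : k₃ = k₂ ∨ k₃ = k₂ + 1 := by
    have hA : ((k₃ - k₂ : ℤ) : ℝ) < 2 := by push_cast; linarith
    have hB : (-1 : ℝ) < ((k₃ - k₂ : ℤ) : ℝ) := by push_cast; linarith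
    have hA' : (k₃ - k₂ : ℤ) < 2 := by exact_mod_cast hA
    have hB' : (-1 : ℤ) < (k₃ - k₂ : ℤ) := by exact_mod_cast hB
    omega
  have d31 : k₃ = k₁ ∨ k₃ = k₁ + 1 := by
    have hA : ((k₃ - k₁ : ℤ) : ℝ) < 2 := by push_cast; linarith
    have hB : (-1 : ℝ) < ((k₃ - k₁ : ℤ) : ℝ) := by push_cast; linarith
    have hA' : (k₃ - k₁ : ℤ) < 2 := by exact_mod_cast hA
    have hB' : (-1 : ℤ) < (k₃ - k₁ : ℤ) := by exact_mod_cast hB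
    omega
  have hcases : (k₂ = k₁ ∧ k₃ = k₁) ∨ (k₂ = k₁ ∧ k₃ = k₁ + 1) ∨
      (k₂ = k₁ + 1 ∧ k₃ = k₁ + 1) := by omega
  unfold CyclicallyOriented
  rcases hcases with ⟨h2', h3'⟩ | ⟨h2', h3'⟩ | ⟨h2', h3'⟩ <;> subst h2' <;> subst h3' <;>
    push_cast at e₁ e₂ e₃
  · exact Or.inl ⟨by linarith, by linarith⟩
  · exact Or.inr (Or.inr ⟨by linarith, by linarith⟩)
  · exact Or.inr (Or.inl ⟨by linarith, by linarith⟩)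

lemma key_mono {p : ℝ} (hp : 1 < p) {x₁ x₂ y₁ y₂ : ℝ}
    (hx₁ : x₁ ∈ Set.Ico (0:ℝ) 1) (hx₂ : x₂ ∈ Set.Ico (0:ℝ) 1)
    (hy₁ : y₁ ∈ Set.Ico (0:ℝ) 1) (hy₂ : y₂ ∈ Set.Ico (0:ℝ) 1)
    (hyne : y₁ ≠ y₂)
    (hopt2 : circleDist x₁ y₁ ^ p + circleDist x₂ y₂ ^ p ≤
      circleDist x₁ y₂ ^ p + circleDist x₂ y₁ ^ p)
    {a c : ℝ} {m n : ℤ} (ha : a = x₁ + m) (hc : c = x₂ + n) (hac : a < c) :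
    a + (y₁ - x₁ - round (y₁ - x₁)) < c + (y₂ - x₂ - round (y₂ - x₂)) := by
  set K₁ : ℤ := round (y₁ - x₁) with hK₁
  set K₂ : ℤ := round (y₂ - x₂) with hK₂
  set δ₁ : ℝ := y₁ - x₁ - K₁ with hδ₁
  set δ₂ : ℝ := y₂ - x₂ - K₂ with hδ₂
  by_contra hcon
  push_neg at hcon
  obtain ⟨hy10, hy11⟩ := hy₁
  obtain ⟨hy20, hy21⟩ := hy₂
  rcases eq_or_lt_of_le hcon with heq | hlt
  · -- equality would force y₁ = y₂
    have hz : ((n - m + K₁ - K₂ : ℤ) : ℝ) = y₁ - y₂ := by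
      push_cast
      rw [hδ₁, hδ₂] at heq
      linarith [heq]
    have h1 : (-1 : ℤ) < n - m + K₁ - K₂ := by
      have : (-1 : ℝ) < ((n - m + K₁ - K₂ : ℤ) : ℝ) := by rw [hz]; linarith
      exact_mod_cast this
    have h2 : (n - m + K₁ - K₂ : ℤ) < 1 := by
      have : ((n - m + K₁ - K₂ : ℤ) : ℝ) < 1 := by rw [hz]; linarith
      exact_mod_cast this
    have hz0 : (n - m + K₁ - K₂ : ℤ) = 0 := by omega
    apply hyne
    have : ((n - m + K₁ - K₂ : ℤ) : ℝ) = 0 := by exact_mod_cast hz0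
    linarith [hz, this]
  · set u : ℝ := c + δ₂ - a with hu
    set v : ℝ := a + δ₁ - c with hv
    have h1 : δ₂ < u := by rw [hu]; linarith
    have h2 : u < δ₁ := by rw [hu]; linarith
    have hEx := exchange_strict hp h1 h2
    have hvu : δ₂ + δ₁ - u = v := by rw [hu, hv]; ring
    rw [hvu] at hEx
    have hd1 : circleDist x₁ y₂ ≤ |u| := by
      have heq' : x₁ - y₂ + ((K₂ + m - n : ℤ) : ℝ) = -u := by
        rw [hu, hδ₂]
        push_cast
        linarith [ha, hc]
      calc circleDist x₁ y₂ ≤ |x₁ - y₂ + ((K₂ + m - n : ℤ) : ℝ)| :=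
            circleDist_le_abs_add_int ⟨hx₁.1, hx₁.2⟩ ⟨hy20, hy21⟩ _
      _ = |u| := by rw [heq', abs_neg]
    have hd2 : circleDist x₂ y₁ ≤ |v| := by
      have heq' : x₂ - y₁ + ((K₁ + n - m : ℤ) : ℝ) = -v := by
        rw [hv, hδ₁]
        push_cast
        linarith [ha, hc]
      calc circleDist x₂ y₁ ≤ |x₂ - y₁ + ((K₁ + n - m : ℤ) : ℝ)| :=
            circleDist_le_abs_add_int ⟨hx₂.1, hx₂.2⟩ ⟨hy10, hy11⟩ _
      _ = |v| := by rw [heq', abs_neg]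
    have hp0 : (0:ℝ) ≤ p := by linarith
    have hq1 : circleDist x₁ y₂ ^ p ≤ |u| ^ p :=
      Real.rpow_le_rpow (circleDist_nonneg' ⟨hx₁.1, hx₁.2⟩ ⟨hy20, hy21⟩) hd1 hp0
    have hq2 : circleDist x₂ y₁ ^ p ≤ |v| ^ p :=
      Real.rpow_le_rpow (circleDist_nonneg' ⟨hx₂.1, hx₂.2⟩ ⟨hy10, hy11⟩) hd2 hp0
    have he1 : circleDist x₁ y₁ = |δ₁| := by
      rw [hδ₁, hK₁]
      exact circleDist_eq_abs_round ⟨hx₁.1, hx₁.2⟩ ⟨hy10, hy11⟩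
    have he2 : circleDist x₂ y₂ = |δ₂| := by
      rw [hδ₂, hK₂]
      exact circleDist_eq_abs_round ⟨hx₂.1, hx₂.2⟩ ⟨hy20, hy21⟩
    rw [he1, he2] at hopt2
    linarith

lemma sum_split {L : ℕ} (i j : Fin L) (hij : i ≠ j) (F : Fin L → ℝ) :
    ∑ k, F k = F i + F j + ∑ k ∈ (Finset.univ.erase i).erase j, F k := by
  rw [← Finset.add_sum_erase _ F (Finset.mem_univ i),
    ← Finset.add_sum_erase _ F (Finset.mem_erase.mpr ⟨hij.symm, Finset.mem_univ j⟩)]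
  ring


open Finset in
/-- For `p > 1`, if the `2L` points together with their antipodes are pairwise
distinct, then every optimal matching on the circle is cyclic. -/
theorem optimal_circle_matching_cyclic_of_one_lt_exponent
    (p : ℝ) (hp : 1 < p) (L : ℕ)
    (r b : Fin L → ℝ)
    (hr : ∀ i, r i ∈ Set.Ico (0 : ℝ) 1) (hb : ∀ i, b i ∈ Set.Ico (0 : ℝ) 1)
    (hdist : Function.Injective
      (Sum.elim (Sum.elim r b) (Sum.elim (fun i => antipode (r i)) (fun i => antipode (b i))) :
        (Fin L ⊕ Fin L) ⊕ (Fin L ⊕ Fin L) → ℝ))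
    (π : Equiv.Perm (Fin L))
    (hopt : ∀ π' : Equiv.Perm (Fin L),
      ∑ i, circleDist (r i) (b (π i)) ^ p ≤ ∑ i, circleDist (r i) (b (π' i)) ^ p) :
    ∀ i₁ i₂ i₃ : Fin L, i₁ ≠ i₂ → i₁ ≠ i₃ → i₂ ≠ i₃ →
      (CyclicallyOriented (r i₁) (r i₂) (r i₃) ↔
        CyclicallyOriented (b (π i₁)) (b (π i₂)) (b (π i₃))) := by
  -- pairwise distinctness of the red points and of the blue points
  have hrne : ∀ i j : Fin L, i ≠ j → r i ≠ r j := by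
    intro i j hij h
    apply hij
    have h2 := hdist (a₁ := Sum.inl (Sum.inl i)) (a₂ := Sum.inl (Sum.inl j)) (by simpa using h)
    simpa using h2
  have hbne : ∀ i j : Fin L, i ≠ j → b i ≠ b j := by
    intro i j hij h
    apply hij
    have h2 := hdist (a₁ := Sum.inl (Sum.inr i)) (a₂ := Sum.inl (Sum.inr j)) (by simpa using h)
    simpa using h2
  have hbπne : ∀ i j : Fin L, i ≠ j → b (π i) ≠ b (π j) := fun i j hij =>
    hbne _ _ (fun h => hij (π.injective h))
  -- pairwise optimality via transposition exchange
  have hpair : ∀ i j : Fin L, i ≠ j →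
      circleDist (r i) (b (π i)) ^ p + circleDist (r j) (b (π j)) ^ p ≤
      circleDist (r i) (b (π j)) ^ p + circleDist (r j) (b (π i)) ^ p := by
    intro i j hij
    have h := hopt (π * Equiv.swap i j)
    have e1 : ∑ k, circleDist (r k) (b (π k)) ^ p
        = circleDist (r i) (b (π i)) ^ p + circleDist (r j) (b (π j)) ^ p +
          ∑ k ∈ (Finset.univ.erase i).erase j, circleDist (r k) (b (π k)) ^ p :=
      sum_split i j hij _
    have e2 : ∑ k, circleDist (r k) (b ((π * Equiv.swap i j) k)) ^ p
        = circleDist (r i) (b ((π * Equiv.swap i j) i)) ^ p +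
          circleDist (r j) (b ((π * Equiv.swap i j) j)) ^ p +
          ∑ k ∈ (Finset.univ.erase i).erase j,
            circleDist (r k) (b ((π * Equiv.swap i j) k)) ^ p :=
      sum_split i j hij _
    have hti : (π * Equiv.swap i j) i = π j := by
      simp [Equiv.Perm.mul_apply]
    have htj : (π * Equiv.swap i j) j = π i := by
      simp [Equiv.Perm.mul_apply]
    have htail : ∑ k ∈ (Finset.univ.erase i).erase j,
          circleDist (r k) (b ((π * Equiv.swap i j) k)) ^ p
        = ∑ k ∈ (Finset.univ.erase i).erase j, circleDist (r k) (b (π k)) ^ p := by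
      apply Finset.sum_congr rfl
      intro k hk
      rw [Finset.mem_erase, Finset.mem_erase] at hk
      rw [Equiv.Perm.mul_apply, Equiv.swap_apply_of_ne_of_ne hk.2.1 hk.1]
    rw [hti, htj, htail] at e2
    rw [e1, e2] at h
    linarith
  -- the displacement function
  set D : Fin L → ℝ := fun k => b (π k) - r k - (round (b (π k) - r k) : ℝ) with hD
  -- strict monotonicity of the lifted matching
  have mono : ∀ (i j : Fin L) (a c : ℝ) (m n : ℤ), a = r i + m → c = r j + n → a < c →
      a + D i < c + D j := by
    intro i j a c m n ha hc hac
    by_cases hij : i = j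
    · subst hij
      simp only [hD]
      linarith
    · simp only [hD]
      exact key_mono hp (hr i) (hr j) (hb (π i)) (hb (π j)) (hbπne i j hij)
        (hpair i j hij) ha hc hac
  -- sorted forward statement
  have Hfwd : ∀ j₁ j₂ j₃ : Fin L, r j₁ < r j₂ → r j₂ < r j₃ →
      CyclicallyOriented (b (π j₁)) (b (π j₂)) (b (π j₃)) := by
    intro j₁ j₂ j₃ h12' h23'
    have c12 : r j₁ + D j₁ < r j₂ + D j₂ :=
      mono j₁ j₂ (r j₁) (r j₂) 0 0 (by push_cast; ring) (by push_cast; ring) h12'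
    have c23 : r j₂ + D j₂ < r j₃ + D j₃ :=
      mono j₂ j₃ (r j₂) (r j₃) 0 0 (by push_cast; ring) (by push_cast; ring) h23'
    have c31 : r j₃ + D j₃ < r j₁ + 1 + D j₁ :=
      mono j₃ j₁ (r j₃) (r j₁ + 1) 0 1 (by push_cast; ring) (by push_cast; ring)
        (by have := (hr j₃).2; have := (hr j₁).1; linarith)
    refine residue_orient (k₁ := -round (b (π j₁) - r j₁)) (k₂ := -round (b (π j₂) - r j₂))
      (k₃ := -round (b (π j₃) - r j₃)) c12 c23 (by linarith) (hb (π j₁)) (hb (π j₂)) (hb (π j₃))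
      ?_ ?_ ?_ <;> (simp only [hD]; push_cast; ring)
  -- general forward statement
  have FWD : ∀ j₁ j₂ j₃ : Fin L, CyclicallyOriented (r j₁) (r j₂) (r j₃) →
      CyclicallyOriented (b (π j₁)) (b (π j₂)) (b (π j₃)) := by
    intro j₁ j₂ j₃ hco
    unfold CyclicallyOriented at hco
    rcases hco with ⟨h1, h2⟩ | ⟨h1, h2⟩ | ⟨h1, h2⟩
    · exact Hfwd j₁ j₂ j₃ h1 h2
    · exact CO_rot (CO_rot (Hfwd j₂ j₃ j₁ h1 h2))
    · exact CO_rot (Hfwd j₃ j₁ j₂ h1 h2)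
  intro i₁ i₂ i₃ h12 h13 h23
  constructor
  · exact FWD i₁ i₂ i₃
  · intro hcb
    by_contra hcr
    have h' : CyclicallyOriented (r i₁) (r i₃) (r i₂) := by
      rcases CO_total (hrne _ _ h12) (hrne _ _ h23) (hrne _ _ h13) with h | h
      · exact absurd h hcr
      · exact h
    exact CO_asymm hcb (FWD i₁ i₃ i₂ h')
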